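/- Let A, W₀ be fixed n×n real matrices and B : Mat(n,ℝ) → Mat(n,ℝ) a linear map. There exist ε > 0 and an open neighborhood V of W₀ in Mat(n,ℝ) such that for every h with |h| < ε, the equation W₀ = (Id - h·A·B(X))·X·(Id + h·B(X)·Aᵀ) has a unique solution X ∈ V. -/

import Mathlib

open Matrix

attribute [local instance] Matrix.frobeniusNormedAddCommGroup Matrix.frobeniusNormedSpace

private noncomputable instance instCLMNormFrob {n : ℕ} :
    NormedAddCommGroup (Matrix (Fin n) (Fin n) ℝ →L[ℝ] Matrix (Fin n) (Fin n) ℝ) :=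
  ContinuousLinearMap.toNormedAddCommGroup

private lemma msub {n : ℕ} (X Y Z W : Matrix (Fin n) (Fin n) ℝ) :
    ‖X * Z - Y * W‖ ≤ ‖X - Y‖ * ‖Z‖ + ‖Y‖ * ‖Z - W‖ := by
  have e : X * Z - Y * W = (X - Y) * Z + Y * (Z - W) := by
    simp [sub_mul, mul_sub]
  rw [e]
  exact le_trans (norm_add_le _ _)
    (add_le_add (Matrix.frobenius_norm_mul _ _) (Matrix.frobenius_norm_mul _ _))

set_option maxHeartbeats 1000000 in
private lemma aux_lip {n : ℕ} (A W₀ : Matrix (Fin n) (Fin n) ℝ)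
    (B : Matrix (Fin n) (Fin n) ℝ →L[ℝ] Matrix (Fin n) (Fin n) ℝ)
    (h : ℝ) (X Y : Matrix (Fin n) (Fin n) ℝ) (R : ℝ)
    (hX : ‖X‖ ≤ R) (hY : ‖Y‖ ≤ R) (hh : |h| ≤ 1) :
    ‖(W₀ + h • (A * B X * X) - h • (X * B X * Aᵀ) + h • h • (A * B X * (X * (B X * Aᵀ))))
      - (W₀ + h • (A * B Y * Y) - h • (Y * B Y * Aᵀ) + h • h • (A * B Y * (Y * (B Y * Aᵀ))))‖
      ≤ |h| * (4 * ‖A‖ * ‖B‖ * R + 3 * ‖A‖ ^ 2 * ‖B‖ ^ 2 * R ^ 2) * ‖X - Y‖ := by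
  set a := ‖A‖ with ha
  set c := ‖B‖ with hc
  set d := ‖X - Y‖ with hdd
  have hR : 0 ≤ R := le_trans (norm_nonneg X) hX
  have ha0 : 0 ≤ a := norm_nonneg A
  have hc0 : 0 ≤ c := norm_nonneg (B : _ →L[ℝ] _)
  have hd0 : 0 ≤ d := norm_nonneg _
  have hBX : ‖B X‖ ≤ c * R := le_trans (B.le_opNorm X) (mul_le_mul_of_nonneg_left hX hc0)
  have hBY : ‖B Y‖ ≤ c * R := le_trans (B.le_opNorm Y) (mul_le_mul_of_nonneg_left hY hc0)
  have hBd : ‖B X - B Y‖ ≤ c * d := by rw [← map_sub]; exact B.le_opNorm _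
  have hAT : ‖Aᵀ‖ = a := Matrix.frobenius_norm_transpose A
  -- term 1
  have t1 : ‖A * B X * X - A * B Y * Y‖ ≤ a * (c * d * R + c * R * d) := by
    have e : A * B X * X - A * B Y * Y = A * (B X * X - B Y * Y) := by
      rw [mul_sub, mul_assoc, mul_assoc]
    rw [e]
    calc ‖A * (B X * X - B Y * Y)‖ ≤ a * ‖B X * X - B Y * Y‖ :=
          Matrix.frobenius_norm_mul _ _
      _ ≤ a * (c * d * R + c * R * d) := by
          have := msub (B X) (B Y) X Y
          have h1 : ‖B X - B Y‖ * ‖X‖ + ‖B Y‖ * ‖X - Y‖ ≤ c * d * R + c * R * d := by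
            have := norm_nonneg (B X - B Y); have := norm_nonneg (B Y); nlinarith
          nlinarith [norm_nonneg (B X * X - B Y * Y)]
  -- term 2
  have t2 : ‖X * B X * Aᵀ - Y * B Y * Aᵀ‖ ≤ (d * (c * R) + R * (c * d)) * a := by
    have e : X * B X * Aᵀ - Y * B Y * Aᵀ = (X * B X - Y * B Y) * Aᵀ := by
      rw [sub_mul]
    rw [e]
    calc ‖(X * B X - Y * B Y) * Aᵀ‖ ≤ ‖X * B X - Y * B Y‖ * a := by
          rw [← hAT]; exact Matrix.frobenius_norm_mul _ _
      _ ≤ (d * (c * R) + R * (c * d)) * a := by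
          have := msub X Y (B X) (B Y)
          have h1 : ‖X - Y‖ * ‖B X‖ + ‖Y‖ * ‖B X - B Y‖ ≤ d * (c * R) + R * (c * d) := by
            nlinarith [norm_nonneg (B X), mul_le_mul_of_nonneg_left hBX hd0,
              mul_le_mul hY hBd (norm_nonneg _) hR]
          nlinarith [norm_nonneg (X * B X - Y * B Y)]
  -- term 3
  have t3 : ‖A * B X * (X * (B X * Aᵀ)) - A * B Y * (Y * (B Y * Aᵀ))‖
      ≤ a * c * d * (R * (c * R * a)) + a * (c * R) * (d * (c * R * a) + R * (c * d * a)) := by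
    have m1 : ‖A * B X - A * B Y‖ ≤ a * c * d := by
      rw [← mul_sub]
      calc ‖A * (B X - B Y)‖ ≤ a * ‖B X - B Y‖ := Matrix.frobenius_norm_mul _ _
        _ ≤ a * (c * d) := by nlinarith [norm_nonneg (B X - B Y)]
        _ = a * c * d := by ring
    have m2 : ‖X * (B X * Aᵀ)‖ ≤ R * (c * R * a) := by
      calc ‖X * (B X * Aᵀ)‖ ≤ ‖X‖ * ‖B X * Aᵀ‖ := Matrix.frobenius_norm_mul _ _
        _ ≤ R * (c * R * a) := by
            have h2 : ‖B X * Aᵀ‖ ≤ c * R * a := by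
              calc ‖B X * Aᵀ‖ ≤ ‖B X‖ * a := by
                    rw [← hAT]; exact Matrix.frobenius_norm_mul _ _
                _ ≤ c * R * a := by nlinarith [norm_nonneg (B X)]
            nlinarith [norm_nonneg (X), norm_nonneg (B X * Aᵀ)]
    have m3 : ‖A * B Y‖ ≤ a * (c * R) := by
      calc ‖A * B Y‖ ≤ a * ‖B Y‖ := Matrix.frobenius_norm_mul _ _
        _ ≤ a * (c * R) := by nlinarith [norm_nonneg (B Y)]
    have m4 : ‖X * (B X * Aᵀ) - Y * (B Y * Aᵀ)‖ ≤ d * (c * R * a) + R * (c * d * a) := by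
      have := msub X Y (B X * Aᵀ) (B Y * Aᵀ)
      have h2 : ‖B X * Aᵀ‖ ≤ c * R * a := by
        calc ‖B X * Aᵀ‖ ≤ ‖B X‖ * a := by
              rw [← hAT]; exact Matrix.frobenius_norm_mul _ _
          _ ≤ c * R * a := by nlinarith [norm_nonneg (B X)]
      have h3 : ‖B X * Aᵀ - B Y * Aᵀ‖ ≤ c * d * a := by
        rw [← sub_mul]
        calc ‖(B X - B Y) * Aᵀ‖ ≤ ‖B X - B Y‖ * a := by
              rw [← hAT]; exact Matrix.frobenius_norm_mul _ _
          _ ≤ c * d * a := by nlinarith [norm_nonneg (B X - B Y)]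
      nlinarith [norm_nonneg (B X * Aᵀ - B Y * Aᵀ), norm_nonneg (B X * Aᵀ)]
    have := msub (A * B X) (A * B Y) (X * (B X * Aᵀ)) (Y * (B Y * Aᵀ))
    nlinarith [norm_nonneg (A * B X - A * B Y), norm_nonneg (A * B Y),
      norm_nonneg (X * (B X * Aᵀ) - Y * (B Y * Aᵀ)), norm_nonneg (X * (B X * Aᵀ))]
  -- combine
  have e : (W₀ + h • (A * B X * X) - h • (X * B X * Aᵀ) + h • h • (A * B X * (X * (B X * Aᵀ))))
      - (W₀ + h • (A * B Y * Y) - h • (Y * B Y * Aᵀ) + h • h • (A * B Y * (Y * (B Y * Aᵀ))))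
      = h • (A * B X * X - A * B Y * Y) - h • (X * B X * Aᵀ - Y * B Y * Aᵀ)
        + h • h • (A * B X * (X * (B X * Aᵀ)) - A * B Y * (Y * (B Y * Aᵀ))) := by
    simp [smul_sub]; abel
  rw [e]
  have step : ‖h • (A * B X * X - A * B Y * Y) - h • (X * B X * Aᵀ - Y * B Y * Aᵀ)
        + h • h • (A * B X * (X * (B X * Aᵀ)) - A * B Y * (Y * (B Y * Aᵀ)))‖
      ≤ |h| * ‖A * B X * X - A * B Y * Y‖ + |h| * ‖X * B X * Aᵀ - Y * B Y * Aᵀ‖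
        + |h| * |h| * ‖A * B X * (X * (B X * Aᵀ)) - A * B Y * (Y * (B Y * Aᵀ))‖ := by
    refine le_trans (norm_add_le _ _) (add_le_add (le_trans (norm_sub_le _ _) ?_) ?_)
    · simp [norm_smul, Real.norm_eq_abs]
    · exact le_of_eq (by rw [norm_smul, norm_smul, Real.norm_eq_abs]; ring)
  refine le_trans step ?_
  have habs : 0 ≤ |h| := abs_nonneg h
  have hsq : |h| * |h| ≤ |h| := by nlinarith
  set T1 := a * (c * d * R + c * R * d) with hT1
  set T2 := (d * (c * R) + R * (c * d)) * a with hT2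
  set T3 := a * c * d * (R * (c * R * a)) + a * (c * R) * (d * (c * R * a) + R * (c * d * a))
    with hT3
  have hT30 : 0 ≤ T3 := by positivity
  have c1 : |h| * ‖A * B X * X - A * B Y * Y‖ ≤ |h| * T1 :=
    mul_le_mul_of_nonneg_left t1 habs
  have c2 : |h| * ‖X * B X * Aᵀ - Y * B Y * Aᵀ‖ ≤ |h| * T2 :=
    mul_le_mul_of_nonneg_left t2 habs
  have c3 : |h| * |h| * ‖A * B X * (X * (B X * Aᵀ)) - A * B Y * (Y * (B Y * Aᵀ))‖
      ≤ |h| * T3 := by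
    calc |h| * |h| * ‖A * B X * (X * (B X * Aᵀ)) - A * B Y * (Y * (B Y * Aᵀ))‖
        ≤ |h| * ‖A * B X * (X * (B X * Aᵀ)) - A * B Y * (Y * (B Y * Aᵀ))‖ :=
          mul_le_mul_of_nonneg_right hsq (norm_nonneg _)
      _ ≤ |h| * T3 := mul_le_mul_of_nonneg_left t3 habs
  have key : |h| * T1 + |h| * T2 + |h| * T3
      = |h| * (4 * a * c * R + 3 * a ^ 2 * c ^ 2 * R ^ 2) * d := by
    rw [hT1, hT2, hT3]; ring
  linarith

private lemma aux_eq {n : ℕ} (A W₀ X : Matrix (Fin n) (Fin n) ℝ) (h : ℝ)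
    (B : Matrix (Fin n) (Fin n) ℝ →L[ℝ] Matrix (Fin n) (Fin n) ℝ) :
    (W₀ + h • (A * B X * X) - h • (X * B X * Aᵀ) + h • h • (A * B X * (X * (B X * Aᵀ)))) - X
      = W₀ - (1 - h • (A * B X)) * X * (1 + h • (B X * Aᵀ)) := by
  simp only [mul_add, add_mul, sub_mul, mul_sub, mul_one, one_mul, Matrix.smul_mul,
    Matrix.mul_smul, mul_assoc, smul_smul]
  abel

set_option maxHeartbeats 2000000 in
/-- There exist `ε > 0` and an open neighborhood `V` of `W₀` such that for
every `h` with `|h| < ε` the equation `W₀ = (Id - h·A·B(X))·X·(Id + h·B(X)·Aᵀ)` has a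
unique solution `X ∈ V`. -/
theorem stmt_1 {n : ℕ} (A W₀ : Matrix (Fin n) (Fin n) ℝ)
    (B : Matrix (Fin n) (Fin n) ℝ →L[ℝ] Matrix (Fin n) (Fin n) ℝ) :
    ∃ ε > (0 : ℝ), ∃ V : Set (Matrix (Fin n) (Fin n) ℝ), IsOpen V ∧ W₀ ∈ V ∧
      ∀ h : ℝ, |h| < ε →
        ∃! X, X ∈ V ∧ W₀ = (1 - h • (A * B X)) * X * (1 + h • (B X * Aᵀ)) := by
  classical
  set Φ : ℝ → Matrix (Fin n) (Fin n) ℝ → Matrix (Fin n) (Fin n) ℝ := fun h X =>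
    W₀ + h • (A * B X * X) - h • (X * B X * Aᵀ) + h • h • (A * B X * (X * (B X * Aᵀ)))
    with hΦ
  set R : ℝ := ‖W₀‖ + 1 with hRdef
  have hR0 : 0 ≤ R := by positivity
  set K : ℝ := 4 * ‖A‖ * ‖B‖ * R + 3 * ‖A‖ ^ 2 * ‖B‖ ^ 2 * R ^ 2 with hKdef
  have hK0 : 0 ≤ K := by positivity
  set ε : ℝ := min 1 (1 / (2 * (K * R + K + 1))) with hεdef
  have hden : 0 < 2 * (K * R + K + 1) := by positivity
  have hε0 : 0 < ε := lt_min one_pos (by positivity)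
  refine ⟨ε, hε0, Metric.ball W₀ 1, Metric.isOpen_ball, Metric.mem_ball_self one_pos, ?_⟩
  intro h hh
  have hh1 : |h| ≤ 1 := le_of_lt (lt_of_lt_of_le hh (min_le_left _ _))
  have h2 : |h| ≤ 1 / (2 * (K * R + K + 1)) := le_of_lt (lt_of_lt_of_le hh (min_le_right _ _))
  rw [le_div_iff₀ hden] at h2
  have hhK : |h| * K ≤ 1 / 2 := by
    ring_nf at h2 ⊢
    nlinarith [abs_nonneg h, mul_nonneg (abs_nonneg h) hK0,
      mul_nonneg (mul_nonneg (abs_nonneg h) hK0) hR0]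
  have hhKR : |h| * K * R ≤ 1 / 2 := by
    ring_nf at h2 ⊢
    nlinarith [abs_nonneg h, mul_nonneg (abs_nonneg h) hK0,
      mul_nonneg (mul_nonneg (abs_nonneg h) hK0) hR0]
  -- norm bound on the closed ball
  have hmem_norm : ∀ X ∈ Metric.closedBall W₀ 1, ‖X‖ ≤ R := by
    intro X hX
    have : ‖X - W₀‖ ≤ 1 := by
      simpa [Metric.mem_closedBall, dist_eq_norm] using hX
    calc ‖X‖ = ‖X - W₀ + W₀‖ := by congr 1; abel
      _ ≤ ‖X - W₀‖ + ‖W₀‖ := norm_add_le _ _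
      _ ≤ 1 + ‖W₀‖ := by linarith
      _ = R := by rw [hRdef]; ring
  -- Lipschitz bound
  have lip : ∀ X ∈ Metric.closedBall W₀ 1, ∀ Y ∈ Metric.closedBall W₀ 1,
      ‖Φ h X - Φ h Y‖ ≤ |h| * K * ‖X - Y‖ := by
    intro X hX Y hY
    exact aux_lip A W₀ B h X Y R (hmem_norm X hX) (hmem_norm Y hY) hh1
  have hΦ0 : Φ h 0 = W₀ := by simp [hΦ]
  -- maps closed ball into itself (indeed into the open ball)
  have hmaps : ∀ X ∈ Metric.closedBall W₀ 1, ‖Φ h X - W₀‖ ≤ 1 / 2 := by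
    intro X hX
    have hn0 : ‖(0 : Matrix (Fin n) (Fin n) ℝ)‖ ≤ R := by
      rw [norm_zero]; positivity
    have := aux_lip A W₀ B h X 0 R (hmem_norm X hX) hn0 hh1
    rw [show (W₀ + h • (A * B 0 * 0) - h • (0 * B 0 * Aᵀ)
        + h • h • (A * B 0 * (0 * (B 0 * Aᵀ)))) = W₀ by simp] at this
    have hXR : ‖X - 0‖ ≤ R := by simpa using hmem_norm X hX
    calc ‖Φ h X - W₀‖ ≤ |h| * K * ‖X - 0‖ := this
      _ ≤ |h| * K * R := by
          have := mul_nonneg (abs_nonneg h) hK0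
          nlinarith
      _ ≤ 1 / 2 := hhKR
  have hmaps' : ∀ X ∈ Metric.closedBall W₀ 1, Φ h X ∈ Metric.closedBall W₀ 1 := by
    intro X hX
    simp only [Metric.mem_closedBall, dist_eq_norm]
    linarith [hmaps X hX]
  -- existence via Banach fixed point on the closed ball
  set s : Set (Matrix (Fin n) (Fin n) ℝ) := Metric.closedBall W₀ 1 with hs
  have hsc : IsClosed s := Metric.isClosed_closedBall
  haveI : CompleteSpace s := hsc.completeSpace_coe
  haveI : Nonempty s := ⟨⟨W₀, Metric.mem_closedBall_self one_pos.le⟩⟩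
  set f : s → s := fun x => ⟨Φ h x.1, hmaps' x.1 x.2⟩ with hf
  have hcontr : ContractingWith (1/2 : NNReal) f := by
    constructor
    · rw [← NNReal.coe_lt_coe]; norm_num
    · apply LipschitzWith.of_dist_le_mul
      intro x y
      simp only [Subtype.dist_eq, dist_eq_norm]
      calc ‖Φ h x.1 - Φ h y.1‖ ≤ |h| * K * ‖x.1 - y.1‖ := lip x.1 x.2 y.1 y.2
        _ ≤ (1/2 : NNReal) * ‖x.1 - y.1‖ := by
            push_cast
            exact mul_le_mul_of_nonneg_right hhK (norm_nonneg _)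
  set X₀ : s := hcontr.fixedPoint f with hX₀
  have hfix : Φ h X₀.1 = X₀.1 := congrArg Subtype.val hcontr.fixedPoint_isFixedPt
  -- X₀ lies in the open ball
  have hX₀ball : (X₀ : Matrix (Fin n) (Fin n) ℝ) ∈ Metric.ball W₀ 1 := by
    simp only [Metric.mem_ball, dist_eq_norm]
    have := hmaps X₀.1 X₀.2
    rw [hfix] at this
    linarith
  -- fixed point iff equation
  have equiv : ∀ X : Matrix (Fin n) (Fin n) ℝ,
      (W₀ = (1 - h • (A * B X)) * X * (1 + h • (B X * Aᵀ))) ↔ Φ h X = X := by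
    intro X
    have e' : Φ h X - X = W₀ - (1 - h • (A * B X)) * X * (1 + h • (B X * Aᵀ)) := by
      simp only [hΦ]
      exact aux_eq A W₀ X h B
    constructor
    · intro hE
      have hz : Φ h X - X = 0 := by rw [e', ← hE, sub_self]
      exact sub_eq_zero.mp hz
    · intro hF
      have hz : W₀ - (1 - h • (A * B X)) * X * (1 + h • (B X * Aᵀ)) = 0 := by
        rw [← e', hF, sub_self]
      exact sub_eq_zero.mp hz
  refine ⟨X₀.1, ⟨hX₀ball, (equiv X₀.1).mpr hfix⟩, ?_⟩
  intro Y hY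
  obtain ⟨hYball, hYeq⟩ := hY
  have hYfix : Φ h Y = Y := (equiv Y).mp hYeq
  have hYs : Y ∈ Metric.closedBall W₀ 1 := Metric.ball_subset_closedBall hYball
  have hd : ‖Y - X₀.1‖ ≤ |h| * K * ‖Y - X₀.1‖ := by
    calc ‖Y - X₀.1‖ = ‖Φ h Y - Φ h X₀.1‖ := by rw [hYfix, hfix]
      _ ≤ |h| * K * ‖Y - X₀.1‖ := lip Y hYs X₀.1 X₀.2
  have : ‖Y - X₀.1‖ ≤ (1/2) * ‖Y - X₀.1‖ := by
    calc ‖Y - X₀.1‖ ≤ |h| * K * ‖Y - X₀.1‖ := hd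
      _ ≤ (1/2) * ‖Y - X₀.1‖ := mul_le_mul_of_nonneg_right hhK (norm_nonneg _)
  have hle0 : ‖Y - X₀.1‖ ≤ 0 := by linarith
  have : ‖Y - X₀.1‖ = 0 := le_antisymm hle0 (norm_nonneg _)
  have := norm_eq_zero.mp this
  exact sub_eq_zero.mp this
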